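/- Let H be a real inner product space, a_h : H × H → ℝ a bilinear form that is bounded with constant c_b (|a_h(v,w)| ≤ c_b·‖v‖₁·‖w‖₁ for a seminorm ‖·‖₁), and suppose vectors U, V ∈ H and f ∈ H satisfy ‖V‖² = ⟨f, V⟩ − a_h(U, V). If moreover the inverse inequality ‖w‖₁ ≤ c_i·h⁻¹·‖w‖ holds for all w in a subspace containing V, and ‖v‖₋ ≤ c_α‖v‖₁ holds for the duality pairing bound ⟨f,V⟩ ≤ ‖f‖₊·‖V‖₋, then ‖V‖ ≤ c_i·h⁻¹·(c_α‖f‖₊ + c_b‖U‖₁). -/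

import Mathlib

/-- Abstract Lemma 3.4: if ‖V‖² = ⟨f,V⟩ − a_h(U,V) with the pairing, embedding,
    continuity and inverse-inequality bounds, then ‖V‖ ≤ c_i h⁻¹ (c_α‖f‖₊ + c_b‖U‖₁). -/
theorem stmt_9 {H : Type*} [NormedAddCommGroup H] [InnerProductSpace ℝ H]
    (ah : H → H → ℝ) (n1 np nm : H → ℝ)
    (c_b c_i c_α h : ℝ) (hcb : 0 < c_b) (hci : 0 < c_i) (hcα : 0 < c_α) (hh : 0 < h)
    (hn1 : ∀ v, 0 ≤ n1 v) (hnp : ∀ v, 0 ≤ np v) (hnm : ∀ v, 0 ≤ nm v)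
    (U V f : H)
    (hbound : |ah U V| ≤ c_b * n1 U * n1 V)
    (heq : ‖V‖ ^ 2 = inner ℝ f V - ah U V)
    (hpair : (inner ℝ f V : ℝ) ≤ np f * nm V)
    (hemb : nm V ≤ c_α * n1 V)
    (hinv : n1 V ≤ c_i * h⁻¹ * ‖V‖) :
    ‖V‖ ≤ c_i * h⁻¹ * (c_α * np f + c_b * n1 U) := by
  have hpos : 0 < c_i * h⁻¹ := mul_pos hci (inv_pos.mpr hh)
  rcases eq_or_lt_of_le (norm_nonneg V) with hV | hV
  · rw [← hV]
    have := hnp f; have := hn1 U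
    positivity
  have key : ‖V‖ ^ 2 ≤ (c_α * np f + c_b * n1 U) * n1 V := by
    have h1 : inner ℝ f V ≤ np f * (c_α * n1 V) :=
      hpair.trans (mul_le_mul_of_nonneg_left hemb (hnp f))
    have h2 : -ah U V ≤ c_b * n1 U * n1 V := (neg_le_abs _).trans hbound
    calc ‖V‖ ^ 2 = inner ℝ f V - ah U V := heq
      _ ≤ np f * (c_α * n1 V) + c_b * n1 U * n1 V := by linarith
      _ = (c_α * np f + c_b * n1 U) * n1 V := by ring
  have key2 : ‖V‖ ^ 2 ≤ (c_α * np f + c_b * n1 U) * (c_i * h⁻¹ * ‖V‖) := by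
    refine key.trans (mul_le_mul_of_nonneg_left hinv ?_)
    have := hnp f; have := hn1 U
    positivity
  have : ‖V‖ * ‖V‖ ≤ (c_i * h⁻¹ * (c_α * np f + c_b * n1 U)) * ‖V‖ := by
    nlinarith [key2]
  exact le_of_mul_le_mul_right this hV
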